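/- A metric space quasi-isometric to a metric space satisfying the Bottleneck Property (for geodesic spaces with midpoints) is Gromov hyperbolic; in particular, any geodesic metric space quasi-isometric to a simplicial tree is Gromov δ-hyperbolic for some δ ≥ 0. -/

import Mathlib

/-- A geodesic metric space. -/
def GeodesicMetricSpace (X : Type*) [MetricSpace X] : Prop :=
  ∀ x y : X, ∃ γ : ℝ → X, γ 0 = x ∧ γ (dist x y) = y ∧
    ∀ s ∈ Set.Icc 0 (dist x y), ∀ t ∈ Set.Icc 0 (dist x y), dist (γ s) (γ t) = |s - t|

/-- The Bottleneck Property of Manning. -/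
def BottleneckProperty (T : Type*) [MetricSpace T] : Prop :=
  ∃ Δ > (0:ℝ), ∀ x y : T, ∃ m : T,
    dist x m = dist x y / 2 ∧ dist y m = dist x y / 2 ∧
    ∀ γ : ℝ → T, ContinuousOn γ (Set.Icc 0 1) → γ 0 = x → γ 1 = y →
      ∃ t ∈ Set.Icc (0:ℝ) 1, dist (γ t) m ≤ Δ

open Set Metric

namespace Stmt16Aux

variable {X T : Type*} [MetricSpace X] [MetricSpace T]

/-- `g` is a unit-speed geodesic on `[0,d]`. -/
def IsGeod {α : Type*} [MetricSpace α] (g : ℝ → α) (d : ℝ) : Prop :=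
  ∀ s ∈ Icc 0 d, ∀ t ∈ Icc 0 d, dist (g s) (g t) = |s - t|

lemma IsGeod.continuousOn {g : ℝ → T} {d : ℝ} (hg : IsGeod g d) :
    ContinuousOn g (Icc 0 d) := by
  apply LipschitzOnWith.continuousOn (K := 1)
  apply LipschitzOnWith.of_dist_le_mul
  intro s hs t ht
  rw [hg s hs t ht, Real.dist_eq]
  simp

lemma interp_mem {a b s : ℝ} (h0 : 0 ≤ s) (h1 : s ≤ 1) :
    a + s * (b - a) ∈ Icc (min a b) (max a b) := by
  rcases le_total a b with h | h
  · rw [min_eq_left h, max_eq_right h]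
    constructor <;> nlinarith
  · rw [min_eq_right h, max_eq_left h]
    constructor <;> nlinarith

/-- A (possibly reversed) subsegment of a geodesic, as a `Path`. -/
def geodPath {g : ℝ → T} {d : ℝ} (hg : IsGeod g d) {a b : ℝ}
    (ha : a ∈ Icc 0 d) (hb : b ∈ Icc 0 d) : Path (g a) (g b) where
  toFun := fun s => g (a + (s : ℝ) * (b - a))
  continuous_toFun := by
    apply hg.continuousOn.comp_continuous
    · exact continuous_const.add (continuous_subtype_val.mul continuous_const)
    · intro s
      have h := interp_mem (a := a) (b := b) s.2.1 s.2.2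
      exact ⟨le_trans (le_min ha.1 hb.1) h.1, le_trans h.2 (max_le ha.2 hb.2)⟩
  source' := by norm_num
  target' := by norm_num

lemma geodPath_range {g : ℝ → T} {d : ℝ} (hg : IsGeod g d) {a b : ℝ}
    (ha : a ∈ Icc 0 d) (hb : b ∈ Icc 0 d) :
    range (geodPath hg ha hb) ⊆ g '' Icc (min a b) (max a b) := by
  rintro _ ⟨s, rfl⟩
  exact ⟨a + (s : ℝ) * (b - a), interp_mem s.2.1 s.2.2, rfl⟩

/-- Cast a path along endpoint equalities. -/
def myCast {a b a' b' : T} (p : Path a b) (ha : a = a') (hb : b = b') : Path a' b' where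
  toContinuousMap := p.toContinuousMap
  source' := ha ▸ p.source'
  target' := hb ▸ p.target'

lemma myCast_range {a b a' b' : T} (p : Path a b) (ha : a = a') (hb : b = b') :
    range (myCast p ha hb) = range p := rfl

def BPData (T : Type*) [MetricSpace T] (Δ : ℝ) : Prop :=
  ∀ x y : T, ∃ m : T,
    dist x m = dist x y / 2 ∧ dist y m = dist x y / 2 ∧
    ∀ γ : ℝ → T, ContinuousOn γ (Set.Icc 0 1) → γ 0 = x → γ 1 = y →
      ∃ t ∈ Set.Icc (0:ℝ) 1, dist (γ t) m ≤ Δ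

lemma bp_on_path {u v m : T} {Δ : ℝ}
    (hm : ∀ γ : ℝ → T, ContinuousOn γ (Set.Icc 0 1) → γ 0 = u → γ 1 = v →
      ∃ t ∈ Set.Icc (0:ℝ) 1, dist (γ t) m ≤ Δ)
    (p : Path u v) : ∃ q ∈ range p, dist q m ≤ Δ := by
  obtain ⟨t, _, ht⟩ := hm p.extend p.continuous_extend.continuousOn
    p.extend_zero p.extend_one
  refine ⟨p.extend t, ?_, ht⟩
  rw [← Path.extend_range]
  exact mem_range_self t



lemma L3half {Δ : ℝ} (hB : BPData T Δ) {g : ℝ → T} {d : ℝ} (hg : IsGeod g d)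
    (p : Path (g 0) (g d)) {s : ℝ} (hs : s ∈ Icc 0 d) (h2s : 2 * s ≤ d) :
    ∃ q ∈ range p, dist (g s) q ≤ 3 * Δ := by
  have hs2 : (0:ℝ) ≤ 2 * s := by linarith [hs.1]
  have hd0 : (0:ℝ) ∈ Icc 0 d := ⟨le_refl 0, le_trans hs.1 hs.2⟩
  have hdd : d ∈ Icc 0 d := ⟨hd0.2, le_refl d⟩
  have h2sm : 2 * s ∈ Icc 0 d := ⟨hs2, h2s⟩
  obtain ⟨m, hm1, hm2, hm3⟩ := hB (g 0) (g (2 * s))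
  have d02 : dist (g 0) (g (2 * s)) = 2 * s := by
    rw [hg 0 hd0 (2 * s) h2sm, abs_of_nonpos (by linarith [hs.1])]; ring
  rw [d02] at hm1 hm2
  have hm1' : dist (g 0) m = s := by rw [hm1]; ring
  -- Step 1: dist (g s) m ≤ 2Δ
  have key : dist (g s) m ≤ 2 * Δ := by
    obtain ⟨q1, hq1r, hq1⟩ := bp_on_path hm3 (geodPath hg hd0 h2sm)
    obtain ⟨t₁, ht₁, rfl⟩ := geodPath_range hg hd0 h2sm hq1r
    rw [min_eq_left hs2, max_eq_right hs2] at ht₁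
    have ht₁' : t₁ ∈ Icc 0 d := ⟨ht₁.1, le_trans ht₁.2 h2s⟩
    have e1 : dist (g 0) (g t₁) = t₁ := by
      rw [hg 0 hd0 t₁ ht₁', abs_of_nonpos (by linarith [ht₁.1])]; ring
    have e2 : dist (g s) (g t₁) = |s - t₁| := hg s hs t₁ ht₁'
    have b1 : t₁ ≤ s + Δ := by
      have := dist_triangle (g 0) m (g t₁)
      have h2 := dist_triangle (g 0) (g t₁) m
      rw [dist_comm m (g t₁)] at this
      calc t₁ = dist (g 0) (g t₁) := e1.symm
        _ ≤ dist (g 0) m + dist (g t₁) m := by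
            have := dist_triangle (g 0) m (g t₁)
            rw [dist_comm m (g t₁)] at this; linarith
        _ ≤ s + Δ := by rw [hm1']; linarith
    have b2 : s ≤ t₁ + Δ := by
      calc s = dist (g 0) m := hm1'.symm
        _ ≤ dist (g 0) (g t₁) + dist (g t₁) m := dist_triangle _ _ _
        _ ≤ t₁ + Δ := by rw [e1]; linarith
    calc dist (g s) m ≤ dist (g s) (g t₁) + dist (g t₁) m := dist_triangle _ _ _
      _ ≤ |s - t₁| + Δ := by linarith
      _ ≤ 2 * Δ := by
          have : |s - t₁| ≤ Δ := abs_sub_le_iff.mpr ⟨by linarith, by linarith⟩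
          linarith
  -- Step 2: path p followed by reversed tail of g
  obtain ⟨q, hqr, hq⟩ := bp_on_path hm3 (p.trans (geodPath hg hdd h2sm))
  rw [Path.trans_range] at hqr
  rcases hqr with hqp | hqt
  · exact ⟨q, hqp, by
      calc dist (g s) q ≤ dist (g s) m + dist q m := by
            have := dist_triangle (g s) m q
            rw [dist_comm m q] at this; linarith
        _ ≤ 3 * Δ := by linarith⟩
  · obtain ⟨t, ht, rfl⟩ := geodPath_range hg hdd h2sm hqt
    rw [min_eq_right h2s, max_eq_left h2s] at ht
    have ht' : t ∈ Icc 0 d := ⟨le_trans hs2 ht.1, ht.2⟩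
    have e3 : dist (g s) (g t) = t - s := by
      rw [hg s hs t ht', abs_of_nonpos (by linarith [ht.1])]; ring
    have hst : dist (g s) (g t) ≤ 3 * Δ := by
      calc dist (g s) (g t) ≤ dist (g s) m + dist (g t) m := by
            have := dist_triangle (g s) m (g t)
            rw [dist_comm m (g t)] at this; linarith
        _ ≤ 3 * Δ := by linarith
    have hsmall : s ≤ 3 * Δ := by
      rw [e3] at hst; linarith [ht.1]
    refine ⟨g 0, ?_, ?_⟩
    · exact ⟨0, p.source⟩
    · have : dist (g s) (g 0) = s := by
        rw [hg s hs 0 hd0, sub_zero, abs_of_nonneg hs.1]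
      rw [this]; exact hsmall

lemma L3 {Δ : ℝ} (hB : BPData T Δ) {g : ℝ → T} {d : ℝ} (hg : IsGeod g d)
    (p : Path (g 0) (g d)) {s : ℝ} (hs : s ∈ Icc 0 d) :
    ∃ q ∈ range p, dist (g s) q ≤ 3 * Δ := by
  rcases le_or_gt (2 * s) d with h | h
  · exact L3half hB hg p hs h
  · -- reverse the geodesic and the path
    set g' : ℝ → T := fun t => g (d - t) with hg'def
    have hg' : IsGeod g' d := by
      intro a ha b hb
      have ha' : d - a ∈ Icc 0 d := ⟨by linarith [ha.2], by linarith [ha.1]⟩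
      have hb' : d - b ∈ Icc 0 d := ⟨by linarith [hb.2], by linarith [hb.1]⟩
      show dist (g (d - a)) (g (d - b)) = |a - b|
      rw [hg _ ha' _ hb', abs_sub_comm]
      congr 1; ring
    have e0 : g' 0 = g d := by show g (d - 0) = g d; norm_num
    have ed : g' d = g 0 := by show g (d - d) = g 0; norm_num
    have p' : Path (g' 0) (g' d) := myCast p.symm e0.symm ed.symm
    have hs' : d - s ∈ Icc 0 d := ⟨by linarith [hs.2], by linarith [hs.1]⟩
    obtain ⟨q, hqr, hq⟩ := L3half hB hg' (myCast p.symm e0.symm ed.symm) hs'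
      (by linarith)
    rw [myCast_range, Path.symm_range] at hqr
    refine ⟨q, hqr, ?_⟩
    have : g' (d - s) = g s := by show g (d - (d - s)) = g s; norm_num
    rwa [this] at hq


/-- A geodesic metric space (copied definition to stay in the namespace). -/
def GMS (α : Type*) [MetricSpace α] : Prop :=
  ∀ x y : α, ∃ γ : ℝ → α, γ 0 = x ∧ γ (dist x y) = y ∧
    ∀ s ∈ Set.Icc 0 (dist x y), ∀ t ∈ Set.Icc 0 (dist x y), dist (γ s) (γ t) = |s - t|

/-- A geodesic segment between two points as a path. -/
noncomputable def seg (hT : GMS T) (A B : T) : Path A B :=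
  myCast (geodPath (g := (hT A B).choose) (d := dist A B)
      (hT A B).choose_spec.2.2
      ⟨le_refl 0, dist_nonneg⟩ ⟨dist_nonneg, le_refl _⟩)
    (hT A B).choose_spec.1 (hT A B).choose_spec.2.1

lemma seg_range (hT : GMS T) (A B : T) :
    ∀ q ∈ range (seg hT A B), dist q A ≤ dist A B := by
  intro q hq
  rw [seg, myCast_range] at hq
  obtain ⟨t, ht, rfl⟩ := geodPath_range _ _ _ hq
  rw [min_eq_left dist_nonneg, max_eq_right dist_nonneg] at ht
  have hsp := (hT A B).choose_spec
  have e := hsp.2.2 t ht 0 ⟨le_refl 0, dist_nonneg⟩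
  rw [hsp.1, sub_zero, abs_of_nonneg ht.1] at e
  rw [e]; exact ht.2


/-- Concatenation of segments between consecutive points of a sequence. -/
noncomputable def chain (hT : GMS T) (u : ℕ → T) : (n : ℕ) → Path (u 0) (u n)
  | 0 => Path.refl (u 0)
  | (n+1) => (chain hT u n).trans (seg hT (u n) (u (n+1)))

lemma chain_range (hT : GMS T) (u : ℕ → T) {c : ℝ} (hc : 0 ≤ c)
    (hstep : ∀ i, dist (u i) (u (i+1)) ≤ c) :
    ∀ n, ∀ q ∈ range (chain hT u n), ∃ i, i ≤ n ∧ dist q (u i) ≤ c := by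
  intro n
  induction n with
  | zero =>
      intro q hq
      rw [chain, Path.refl_range] at hq
      rw [hq]
      exact ⟨0, le_refl 0, by simp [hc]⟩
  | succ n ih =>
      intro q hq
      rw [chain, Path.trans_range] at hq
      rcases hq with hq | hq
      · obtain ⟨i, hi, h⟩ := ih q hq
        exact ⟨i, le_trans hi (Nat.le_succ n), h⟩
      · exact ⟨n, Nat.le_succ n, le_trans (seg_range hT _ _ q hq) (hstep n)⟩

/-- Interpolated image of a geodesic in `X` as a continuous path in `T`,
    each of whose points is within `l + C` of a sample `f (α s)`. -/
lemma chain_exists (hT : GMS T) (f : X → T) (l C : ℝ) (hl : 1 ≤ l) (hC0 : 0 ≤ C)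
    (α : ℝ → X) (L : ℝ) (hα : IsGeod α L)
    (hstep : ∀ s ∈ Icc 0 L, ∀ t ∈ Icc 0 L, dist (f (α s)) (f (α t)) ≤ l * |s - t| + C)
    {a b : ℝ} (hab : a ≤ b) (ha : a ∈ Icc 0 L) (hb : b ∈ Icc 0 L) :
    ∃ p : Path (f (α a)) (f (α b)),
      ∀ q ∈ range p, ∃ s ∈ Icc a b, dist q (f (α s)) ≤ l + C := by
  set u : ℕ → T := fun i => f (α (min (a + i) b)) with hu
  have hmem : ∀ i : ℕ, min (a + (i:ℝ)) b ∈ Icc a b := fun i =>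
    ⟨le_min (by linarith [Nat.cast_nonneg (α := ℝ) i]) hab, min_le_right _ _⟩
  have hmemL : ∀ i : ℕ, min (a + (i:ℝ)) b ∈ Icc 0 L := fun i =>
    ⟨le_trans ha.1 (hmem i).1, le_trans (hmem i).2 hb.2⟩
  have hstep' : ∀ i : ℕ, dist (u i) (u (i+1)) ≤ l + C := by
    intro i
    have h1 := hstep _ (hmemL i) _ (hmemL (i+1))
    have hc : ((i:ℕ)+1 : ℝ) = (i:ℝ) + 1 := by push_cast; ring
    set m1 := min (a + (i:ℝ)) b with hm1
    set m2 := min (a + ((i:ℕ)+1:ℝ)) b with hm2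
    have habs : |m1 - m2| ≤ 1 := by
      rw [hm1, hm2, hc]
      have hub : min (a + ((i:ℝ) + 1)) b ≤ min (a + (i:ℝ)) b + 1 := by
        rcases le_total (a + (i:ℝ)) b with h2 | h2
        · calc min (a + ((i:ℝ) + 1)) b ≤ a + (i:ℝ) + 1 := by
                have := min_le_left (a + ((i:ℝ) + 1)) b; linarith
            _ = min (a + (i:ℝ)) b + 1 := by rw [min_eq_left h2]
        · calc min (a + ((i:ℝ) + 1)) b ≤ b := min_le_right _ _
            _ ≤ min (a + (i:ℝ)) b + 1 := by rw [min_eq_right h2]; linarith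
      have hlb : min (a + (i:ℝ)) b ≤ min (a + ((i:ℝ) + 1)) b :=
        min_le_min (by linarith) (le_refl b)
      rw [abs_sub_le_iff]
      constructor <;> linarith
    calc dist (u i) (u (i+1)) ≤ l * |m1 - m2| + C := by
          simpa [hu] using h1
      _ ≤ l + C := by nlinarith
  set n : ℕ := ⌈b - a⌉₊ with hn
  have e0 : u 0 = f (α a) := by
    simp only [hu, Nat.cast_zero, add_zero, min_eq_left hab]
  have en : u n = f (α b) := by
    have : b ≤ a + (n:ℝ) := by
      have := Nat.le_ceil (b - a); linarith
    simp only [hu, min_eq_right this]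
  refine ⟨myCast (chain hT u n) e0 en, ?_⟩
  intro q hq
  rw [myCast_range] at hq
  obtain ⟨i, hi, h⟩ := chain_range hT u (by linarith) hstep' n q hq
  exact ⟨min (a + (i:ℝ)) b, hmem i, h⟩


noncomputable def K3 (l C Δ : ℝ) : ℝ := l*l*(10*Δ + 2*l + 3*C) + 7*Δ + l + 2*C

/-- Morse-type lemma: the image under `f` of a geodesic in `X` stays within
`K3 l C Δ` of any geodesic in `T` joining the images of its endpoints. -/
lemma morse {Δ l C : ℝ} (hT : GMS T) (hB : BPData T Δ) (hΔ : 0 < Δ)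
    (hl : 1 ≤ l) (hC : 0 < C) (f : X → T)
    (hup : ∀ s t : X, dist (f s) (f t) ≤ l * dist s t + C)
    (hlow : ∀ s t : X, dist s t / l - C ≤ dist (f s) (f t))
    (α : ℝ → X) (L : ℝ) (hα : IsGeod α L)
    (g : ℝ → T) (dT : ℝ) (hdT : 0 ≤ dT) (hg : IsGeod g dT)
    (hg0 : g 0 = f (α 0)) (hgd : g dT = f (α L))
    {t₀ : ℝ} (ht₀ : t₀ ∈ Icc 0 L) :
    ∃ σ ∈ Icc 0 dT, dist (f (α t₀)) (g σ) ≤ K3 l C Δ := by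
  have hl0 : (0:ℝ) < l := by linarith
  have hL : 0 ≤ L := le_trans ht₀.1 ht₀.2
  have hLm : L ∈ Icc 0 L := ⟨hL, le_refl L⟩
  have h0m : (0:ℝ) ∈ Icc 0 L := ⟨le_refl 0, hL⟩
  have hstep : ∀ s ∈ Icc 0 L, ∀ t ∈ Icc 0 L,
      dist (f (α s)) (f (α t)) ≤ l * |s - t| + C := by
    intro s hs t ht
    have := hup (α s) (α t)
    rwa [hα s hs t ht] at this
  -- interpolated image paths before and after t₀
  obtain ⟨p1, hp1⟩ := chain_exists hT f l C hl (le_of_lt hC) α L hα hstep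
    ht₀.1 h0m ht₀
  obtain ⟨p2, hp2⟩ := chain_exists hT f l C hl (le_of_lt hC) α L hα hstep
    ht₀.2 ht₀ hLm
  -- geodesics from f (α t₀) to the endpoints
  obtain ⟨h1, h10, h1d, h1g⟩ := hT (f (α t₀)) (f (α 0))
  obtain ⟨h2, h20, h2d, h2g⟩ := hT (f (α t₀)) (f (α L))
  set d1 := dist (f (α t₀)) (f (α 0)) with hd1
  set d2 := dist (f (α t₀)) (f (α L)) with hd2
  have hd10 : 0 ≤ d1 := dist_nonneg
  have hd20 : 0 ≤ d2 := dist_nonneg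
  have h1geod : IsGeod h1 d1 := h1g
  have h2geod : IsGeod h2 d2 := h2g
  set K2 : Set T := h2 '' Icc 0 d2 with hK2
  set Gimg : Set T := g '' Icc 0 dT with hGimg
  have hK2ne : K2.Nonempty := ⟨h2 0, ⟨0, ⟨le_refl 0, hd20⟩, rfl⟩⟩
  -- fact (a)
  have fact_a : ∀ r ∈ Icc 0 d1, ∃ s₂ ∈ Icc 0 t₀,
      dist (h1 r) (f (α s₂)) ≤ 3*Δ + (l + C) := by
    intro r hr
    obtain ⟨q, hqr, hq⟩ := L3 hB h1geod (myCast p1.symm h10.symm h1d.symm) hr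
    rw [myCast_range, Path.symm_range] at hqr
    obtain ⟨s₂, hs₂, hqd⟩ := hp1 q hqr
    exact ⟨s₂, hs₂, le_trans (dist_triangle _ q _) (by linarith)⟩
  -- fact (b)
  have fact_b : ∀ r ∈ Icc 0 d2, ∃ s₁ ∈ Icc t₀ L,
      dist (h2 r) (f (α s₁)) ≤ 3*Δ + (l + C) := by
    intro r hr
    obtain ⟨q, hqr, hq⟩ := L3 hB h2geod (myCast p2 h20.symm h2d.symm) hr
    rw [myCast_range] at hqr
    obtain ⟨s₁, hs₁, hqd⟩ := hp2 q hqr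
    exact ⟨s₁, hs₁, le_trans (dist_triangle _ q _) (by linarith)⟩
  -- fact (c)
  have fact_c : ∀ r ∈ Icc 0 d1,
      infDist (h1 r) K2 ≤ 3*Δ ∨ infDist (h1 r) Gimg ≤ 3*Δ := by
    intro r hr
    have h0d2 : (0:ℝ) ∈ Icc 0 d2 := ⟨le_refl 0, hd20⟩
    have hd2d2 : d2 ∈ Icc 0 d2 := ⟨hd20, le_refl d2⟩
    have h0dT : (0:ℝ) ∈ Icc 0 dT := ⟨le_refl 0, hdT⟩
    have hdTdT : dT ∈ Icc 0 dT := ⟨hdT, le_refl dT⟩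
    set Pa := myCast (geodPath h2geod h0d2 hd2d2) h20 h2d with hPa
    set Pb := myCast (geodPath hg hdTdT h0dT) hgd hg0 with hPb
    obtain ⟨q, hqr, hq⟩ :=
      L3 hB h1geod (myCast (Pa.trans Pb) h10.symm h1d.symm) hr
    rw [myCast_range, Path.trans_range] at hqr
    rcases hqr with hqa | hqb
    · left
      rw [hPa, myCast_range] at hqa
      have := geodPath_range h2geod h0d2 hd2d2 hqa
      rw [min_eq_left hd20, max_eq_right hd20] at this
      exact le_trans (infDist_le_dist_of_mem this) hq
    · right
      rw [hPb, myCast_range] at hqb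
      have := geodPath_range hg hdTdT h0dT hqb
      rw [min_eq_right hdT, max_eq_left hdT] at this
      exact le_trans (infDist_le_dist_of_mem this) hq
  -- the supremum argument
  set S : Set ℝ := {r : ℝ | r ∈ Icc 0 d1 ∧ infDist (h1 r) K2 ≤ 3*Δ} with hS
  have hS0 : (0:ℝ) ∈ S := by
    constructor
    · exact ⟨le_refl 0, hd10⟩
    · have : dist (h1 0) (h2 0) = 0 := by rw [h10, h20, dist_self]
      have hm2 : h2 0 ∈ K2 := ⟨0, ⟨le_refl 0, hd20⟩, rfl⟩
      have h' := infDist_le_dist_of_mem (x := h1 0) hm2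
      rw [this] at h'
      linarith
  have hSne : S.Nonempty := ⟨0, hS0⟩
  have hSbdd : BddAbove S := ⟨d1, fun r hr => hr.1.2⟩
  set r₀ := sSup S with hr₀
  have hr₀0 : 0 ≤ r₀ := le_csSup hSbdd hS0
  have hr₀d : r₀ ≤ d1 := csSup_le hSne (fun r hr => hr.1.2)
  have hr₀m : r₀ ∈ Icc 0 d1 := ⟨hr₀0, hr₀d⟩
  have hdist_h1 : ∀ r ∈ Icc 0 d1, ∀ r' ∈ Icc 0 d1,
      dist (h1 r) (h1 r') = |r - r'| := h1geod
  have mem1 : infDist (h1 r₀) K2 ≤ 3*Δ := by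
    apply le_of_forall_pos_le_add
    intro ε hε
    obtain ⟨r, hrS, hrlt⟩ := exists_lt_of_lt_csSup hSne
      (show r₀ - ε < r₀ by linarith)
    have hrle : r ≤ r₀ := le_csSup hSbdd hrS
    have hd : dist (h1 r₀) (h1 r) ≤ ε := by
      rw [hdist_h1 r₀ hr₀m r hrS.1, abs_of_nonneg (by linarith)]
      linarith
    calc infDist (h1 r₀) K2 ≤ infDist (h1 r) K2 + dist (h1 r₀) (h1 r) :=
          infDist_le_infDist_add_dist
      _ ≤ 3*Δ + ε := by linarith [hrS.2]
  have mem2 : infDist (h1 r₀) Gimg ≤ 3*Δ := by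
    rcases eq_or_lt_of_le hr₀d with heq | hlt
    · have hmem : g 0 ∈ Gimg := ⟨0, ⟨le_refl 0, hdT⟩, rfl⟩
      have : dist (h1 r₀) (g 0) = 0 := by
        rw [heq, h1d, hg0, dist_self]
      have h' := infDist_le_dist_of_mem (x := h1 r₀) hmem
      rw [this] at h'
      linarith
    · apply le_of_forall_pos_le_add
      intro ε hε
      set r := min d1 (r₀ + ε) with hrdef
      have hrgt : r₀ < r := lt_min hlt (by linarith)
      have hrm : r ∈ Icc 0 d1 := ⟨by linarith, min_le_left _ _⟩
      have hrnotS : r ∉ S := fun h => absurd (le_csSup hSbdd h) (not_le.mpr hrgt)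
      have hnK2 : ¬ (infDist (h1 r) K2 ≤ 3*Δ) := fun hc => hrnotS ⟨hrm, hc⟩
      have hGle : infDist (h1 r) Gimg ≤ 3*Δ := (fact_c r hrm).resolve_left hnK2
      have hd : dist (h1 r₀) (h1 r) ≤ ε := by
        rw [hdist_h1 r₀ hr₀m r hrm, abs_of_nonpos (by linarith)]
        have : r ≤ r₀ + ε := min_le_right _ _
        linarith
      calc infDist (h1 r₀) Gimg ≤ infDist (h1 r) Gimg + dist (h1 r₀) (h1 r) :=
            infDist_le_infDist_add_dist
        _ ≤ 3*Δ + ε := by linarith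
  -- extract points
  have hGne : Gimg.Nonempty := ⟨g 0, ⟨0, ⟨le_refl 0, hdT⟩, rfl⟩⟩
  obtain ⟨c₂, hc₂K, hc₂⟩ := (infDist_lt_iff hK2ne).mp
    (lt_of_le_of_lt mem1 (by linarith : 3*Δ < 4*Δ))
  obtain ⟨r₂, hr₂, rfl⟩ := hc₂K
  obtain ⟨cg, hcgG, hcg⟩ := (infDist_lt_iff hGne).mp
    (lt_of_le_of_lt mem2 (by linarith : 3*Δ < 4*Δ))
  obtain ⟨σ, hσ, rfl⟩ := hcgG
  obtain ⟨s₂, hs₂, hfa⟩ := fact_a r₀ hr₀m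
  obtain ⟨s₁, hs₁, hfb⟩ := fact_b r₂ hr₂
  -- distance between the two samples
  have hsamples : dist (f (α s₂)) (f (α s₁)) ≤ 10*Δ + 2*(l+C) := by
    calc dist (f (α s₂)) (f (α s₁))
        ≤ dist (f (α s₂)) (h1 r₀) + dist (h1 r₀) (h2 r₂) + dist (h2 r₂) (f (α s₁)) :=
          dist_triangle4 _ _ _ _
      _ ≤ 10*Δ + 2*(l+C) := by
          rw [dist_comm (f (α s₂)) (h1 r₀)]
          linarith [le_of_lt hc₂]
  have hs₂L : s₂ ∈ Icc 0 L := ⟨hs₂.1, le_trans hs₂.2 ht₀.2⟩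
  have hs₁L : s₁ ∈ Icc 0 L := ⟨le_trans ht₀.1 hs₁.1, hs₁.2⟩
  have hdistX : dist (α s₂) (α s₁) = s₁ - s₂ := by
    rw [hα s₂ hs₂L s₁ hs₁L, abs_of_nonpos (by linarith [hs₂.2, hs₁.1])]
    ring
  have hparam : s₁ - s₂ ≤ l * (10*Δ + 2*(l+C) + C) := by
    have h' := hlow (α s₂) (α s₁)
    rw [hdistX] at h'
    have h'' : (s₁ - s₂) / l ≤ 10*Δ + 2*(l+C) + C := by linarith
    calc s₁ - s₂ = ((s₁ - s₂) / l) * l := by field_simp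
      _ ≤ (10*Δ + 2*(l+C) + C) * l := by
          apply mul_le_mul_of_nonneg_right h'' (le_of_lt hl0)
      _ = l * (10*Δ + 2*(l+C) + C) := by ring
  have hv2 : dist (f (α t₀)) (f (α s₂)) ≤ l * (l * (10*Δ + 2*(l+C) + C)) + C := by
    have h' := hup (α t₀) (α s₂)
    have hdx : dist (α t₀) (α s₂) = t₀ - s₂ := by
      rw [hα t₀ ht₀ s₂ hs₂L, abs_of_nonneg (by linarith [hs₂.2])]
    rw [hdx] at h'
    have ht₀s₂ : t₀ - s₂ ≤ s₁ - s₂ := by linarith [hs₁.1]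
    have : l * (t₀ - s₂) ≤ l * (l * (10*Δ + 2*(l+C) + C)) :=
      mul_le_mul_of_nonneg_left (le_trans ht₀s₂ hparam) (le_of_lt hl0)
    linarith
  refine ⟨σ, hσ, ?_⟩
  have final : dist (f (α t₀)) (g σ)
      ≤ dist (f (α t₀)) (f (α s₂)) + dist (f (α s₂)) (h1 r₀) + dist (h1 r₀) (g σ) :=
    dist_triangle4 _ _ _ _
  rw [dist_comm (f (α s₂)) (h1 r₀)] at final
  have : dist (f (α t₀)) (g σ)
      ≤ (l * (l * (10*Δ + 2*(l+C) + C)) + C) + (3*Δ + (l + C)) + 4*Δ := by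
    linarith [le_of_lt hcg]
  calc dist (f (α t₀)) (g σ)
      ≤ (l * (l * (10*Δ + 2*(l+C) + C)) + C) + (3*Δ + (l + C)) + 4*Δ := this
    _ = K3 l C Δ := by rw [K3]; ring


lemma pull {l C dX dT M : ℝ} (hl0 : 0 < l) (hlow : dX / l - C ≤ dT) (hM : dT ≤ M) :
    dX ≤ l * (M + C) := by
  have h : dX / l ≤ M + C := by linarith
  calc dX = (dX / l) * l := by field_simp
    _ ≤ (M + C) * l := mul_le_mul_of_nonneg_right h (le_of_lt hl0)
    _ = l * (M + C) := by ring

/-- Triangles in `X` are uniformly slim. -/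
lemma slim {Δ l C : ℝ} (hT : GMS T) (hB : BPData T Δ) (hΔ : 0 < Δ)
    (hl : 1 ≤ l) (hC : 0 < C) (f : X → T)
    (hup : ∀ s t : X, dist (f s) (f t) ≤ l * dist s t + C)
    (hlow : ∀ s t : X, dist s t / l - C ≤ dist (f s) (f t))
    (x y z : X)
    (α : ℝ → X) (hα : IsGeod α (dist x y)) (hα0 : α 0 = x) (hαd : α (dist x y) = y)
    (β : ℝ → X) (hβ : IsGeod β (dist x z)) (hβ0 : β 0 = x) (hβd : β (dist x z) = z)
    (γ : ℝ → X) (hγ : IsGeod γ (dist z y)) (hγ0 : γ 0 = z) (hγd : γ (dist z y) = y)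
    {t : ℝ} (ht : t ∈ Icc 0 (dist x y)) :
    ∃ q ∈ (β '' Icc 0 (dist x z)) ∪ (γ '' Icc 0 (dist z y)),
      dist (α t) q ≤ l * (K3 l C Δ + 3*Δ + l + 2*C) := by
  have hl0 : (0:ℝ) < l := by linarith
  obtain ⟨g, hg0, hgd, hgeod⟩ := hT (f x) (f y)
  set dT := dist (f x) (f y) with hdT
  have hg0' : g 0 = f (α 0) := by rw [hg0, hα0]
  have hgd' : g dT = f (α (dist x y)) := by rw [hgd, hαd]
  obtain ⟨σ, hσ, hMorse⟩ := morse hT hB hΔ hl hC f hup hlow α (dist x y) hα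
    g dT dist_nonneg hgeod hg0' hgd' ht
  -- interpolated images of the two other sides
  have hstepβ : ∀ s ∈ Icc 0 (dist x z), ∀ t' ∈ Icc 0 (dist x z),
      dist (f (β s)) (f (β t')) ≤ l * |s - t'| + C := by
    intro s hs t' ht'
    have := hup (β s) (β t')
    rwa [hβ s hs t' ht'] at this
  have hstepγ : ∀ s ∈ Icc 0 (dist z y), ∀ t' ∈ Icc 0 (dist z y),
      dist (f (γ s)) (f (γ t')) ≤ l * |s - t'| + C := by
    intro s hs t' ht'
    have := hup (γ s) (γ t')
    rwa [hγ s hs t' ht'] at this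
  obtain ⟨pβ, hpβ⟩ := chain_exists hT f l C hl (le_of_lt hC) β (dist x z) hβ hstepβ
    dist_nonneg ⟨le_refl 0, dist_nonneg⟩ ⟨dist_nonneg, le_refl _⟩
  obtain ⟨pγ, hpγ⟩ := chain_exists hT f l C hl (le_of_lt hC) γ (dist z y) hγ hstepγ
    dist_nonneg ⟨le_refl 0, dist_nonneg⟩ ⟨dist_nonneg, le_refl _⟩
  set Pβ := myCast pβ (congrArg f hβ0) (congrArg f hβd) with hPβ
  set Pγ := myCast pγ (congrArg f hγ0) (congrArg f hγd) with hPγ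
  set P := myCast (Pβ.trans Pγ) hg0.symm hgd.symm with hP
  obtain ⟨q', hq'r, hq'⟩ := L3 hB hgeod P hσ
  rw [hP, myCast_range, Path.trans_range] at hq'r
  have hbig : dist (f (α t)) q' ≤ K3 l C Δ + 3*Δ := by
    calc dist (f (α t)) q' ≤ dist (f (α t)) (g σ) + dist (g σ) q' := dist_triangle _ _ _
      _ ≤ K3 l C Δ + 3*Δ := by linarith
  rcases hq'r with hqa | hqb
  · rw [hPβ, myCast_range] at hqa
    obtain ⟨s, hsm, hsd⟩ := hpβ q' hqa
    refine ⟨β s, Or.inl ⟨s, hsm, rfl⟩, ?_⟩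
    have hTd : dist (f (α t)) (f (β s)) ≤ K3 l C Δ + 3*Δ + (l + C) := by
      calc dist (f (α t)) (f (β s)) ≤ dist (f (α t)) q' + dist q' (f (β s)) :=
            dist_triangle _ _ _
        _ ≤ K3 l C Δ + 3*Δ + (l + C) := by linarith
    have := pull hl0 (hlow (α t) (β s)) hTd
    calc dist (α t) (β s) ≤ l * ((K3 l C Δ + 3*Δ + (l + C)) + C) := this
      _ = l * (K3 l C Δ + 3*Δ + l + 2*C) := by ring
  · rw [hPγ, myCast_range] at hqb
    obtain ⟨s, hsm, hsd⟩ := hpγ q' hqb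
    refine ⟨γ s, Or.inr ⟨s, hsm, rfl⟩, ?_⟩
    have hTd : dist (f (α t)) (f (γ s)) ≤ K3 l C Δ + 3*Δ + (l + C) := by
      calc dist (f (α t)) (f (γ s)) ≤ dist (f (α t)) q' + dist q' (f (γ s)) :=
            dist_triangle _ _ _
        _ ≤ K3 l C Δ + 3*Δ + (l + C) := by linarith
    have := pull hl0 (hlow (α t) (γ s)) hTd
    calc dist (α t) (γ s) ≤ l * ((K3 l C Δ + 3*Δ + (l + C)) + C) := this
      _ = l * (K3 l C Δ + 3*Δ + l + 2*C) := by ring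


/-- A point on `[x,y]` roughly realizing the Gromov product `(x|y)_w`. -/
lemma seven_a {δs : ℝ} (hδs : 0 ≤ δs) (x y w : X)
    (α : ℝ → X) (hα : IsGeod α (dist x y)) (hα0 : α 0 = x) (hαd : α (dist x y) = y)
    (μ : ℝ → X) (hμ : IsGeod μ (dist x w)) (hμ0 : μ 0 = x) (hμd : μ (dist x w) = w)
    (ν : ℝ → X) (hν : IsGeod ν (dist w y)) (hν0 : ν 0 = w) (hνd : ν (dist w y) = y)
    (hslim : ∀ t ∈ Icc 0 (dist x y),
      ∃ q ∈ (μ '' Icc 0 (dist x w)) ∪ (ν '' Icc 0 (dist w y)), dist (α t) q ≤ δs) :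
    ∃ t₀ ∈ Icc 0 (dist x y),
      2 * dist w (α t₀) ≤ dist x w + dist w y - dist x y + 4*(δs+1) := by
  set dxy := dist x y with hdxy
  set dxw := dist x w with hdxw
  set dwy := dist w y with hdwy
  have hdxy0 : 0 ≤ dxy := dist_nonneg
  have hdxw0 : 0 ≤ dxw := dist_nonneg
  have hdwy0 : 0 ≤ dwy := dist_nonneg
  set Mimg : Set X := μ '' Icc 0 dxw with hMimg
  set Nimg : Set X := ν '' Icc 0 dwy with hNimg
  have hMne : Mimg.Nonempty := ⟨μ 0, 0, ⟨le_refl 0, hdxw0⟩, rfl⟩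
  have hNne : Nimg.Nonempty := ⟨ν 0, 0, ⟨le_refl 0, hdwy0⟩, rfl⟩
  set S : Set ℝ := {t : ℝ | t ∈ Icc 0 dxy ∧ infDist (α t) Mimg ≤ δs} with hS
  have hS0 : (0:ℝ) ∈ S := by
    constructor
    · exact ⟨le_refl 0, hdxy0⟩
    · have hm : μ 0 ∈ Mimg := ⟨0, ⟨le_refl 0, hdxw0⟩, rfl⟩
      have h' := infDist_le_dist_of_mem (x := α 0) hm
      have : dist (α 0) (μ 0) = 0 := by rw [hα0, hμ0, dist_self]
      rw [this] at h'
      linarith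
  have hSne : S.Nonempty := ⟨0, hS0⟩
  have hSbdd : BddAbove S := ⟨dxy, fun r hr => hr.1.2⟩
  set t₀ := sSup S with ht₀def
  have ht₀0 : 0 ≤ t₀ := le_csSup hSbdd hS0
  have ht₀d : t₀ ≤ dxy := csSup_le hSne (fun r hr => hr.1.2)
  have ht₀m : t₀ ∈ Icc 0 dxy := ⟨ht₀0, ht₀d⟩
  have mem1 : infDist (α t₀) Mimg ≤ δs := by
    apply le_of_forall_pos_le_add
    intro ε hε
    obtain ⟨r, hrS, hrlt⟩ := exists_lt_of_lt_csSup hSne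
      (show t₀ - ε < t₀ by linarith)
    have hrle : r ≤ t₀ := le_csSup hSbdd hrS
    have hd : dist (α t₀) (α r) ≤ ε := by
      rw [hα t₀ ht₀m r hrS.1, abs_of_nonneg (by linarith)]
      linarith
    calc infDist (α t₀) Mimg ≤ infDist (α r) Mimg + dist (α t₀) (α r) :=
          infDist_le_infDist_add_dist
      _ ≤ δs + ε := by linarith [hrS.2]
  have mem2 : infDist (α t₀) Nimg ≤ δs := by
    rcases eq_or_lt_of_le ht₀d with heq | hlt
    · have hm : ν dwy ∈ Nimg := ⟨dwy, ⟨hdwy0, le_refl _⟩, rfl⟩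
      have h' := infDist_le_dist_of_mem (x := α t₀) hm
      have : dist (α t₀) (ν dwy) = 0 := by rw [heq, hαd, hνd, dist_self]
      rw [this] at h'
      linarith
    · apply le_of_forall_pos_le_add
      intro ε hε
      set r := min dxy (t₀ + ε) with hrdef
      have hrgt : t₀ < r := lt_min hlt (by linarith)
      have hrm : r ∈ Icc 0 dxy := ⟨by linarith, min_le_left _ _⟩
      have hrnotS : r ∉ S := fun h => absurd (le_csSup hSbdd h) (not_le.mpr hrgt)
      have hnM : ¬ (infDist (α r) Mimg ≤ δs) := fun hc => hrnotS ⟨hrm, hc⟩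
      obtain ⟨q, hq, hdq⟩ := hslim r hrm
      have hqN : q ∈ Nimg := by
        rcases hq with hqM | hqN
        · exact absurd (le_trans (infDist_le_dist_of_mem hqM) hdq) hnM
        · exact hqN
      have hd : dist (α t₀) (α r) ≤ ε := by
        rw [hα t₀ ht₀m r hrm, abs_of_nonpos (by linarith)]
        have : r ≤ t₀ + ε := min_le_right _ _
        linarith
      calc infDist (α t₀) Nimg ≤ infDist (α r) Nimg + dist (α t₀) (α r) :=
            infDist_le_infDist_add_dist
        _ ≤ δs + ε := by
            have : infDist (α r) Nimg ≤ δs := le_trans (infDist_le_dist_of_mem hqN) hdq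
            linarith
  obtain ⟨aPt, haM, hada⟩ := (infDist_lt_iff hMne).mp
    (lt_of_le_of_lt mem1 (by linarith : δs < δs + 1))
  obtain ⟨ra, hram, rfl⟩ := haM
  obtain ⟨bPt, hbN, hbdb⟩ := (infDist_lt_iff hNne).mp
    (lt_of_le_of_lt mem2 (by linarith : δs < δs + 1))
  obtain ⟨rb, hrbm, rfl⟩ := hbN
  refine ⟨t₀, ht₀m, ?_⟩
  -- computations along μ
  have e1 : dist w (μ ra) = dxw - ra := by
    have := hμ dxw ⟨hdxw0, le_refl _⟩ ra hram
    rw [hμd] at this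
    rw [this, abs_of_nonneg (by linarith [hram.2])]
  have e2 : dist x (μ ra) = ra := by
    have := hμ 0 ⟨le_refl 0, hdxw0⟩ ra hram
    rw [hμ0] at this
    rw [this, abs_of_nonpos (by linarith [hram.1])]
    ring
  have e3 : dist x (α t₀) = t₀ := by
    have := hα 0 ⟨le_refl 0, hdxy0⟩ t₀ ht₀m
    rw [hα0] at this
    rw [this, abs_of_nonpos (by linarith)]
    ring
  have hra_lb : t₀ - (δs + 1) ≤ ra := by
    have : dist x (α t₀) ≤ dist x (μ ra) + dist (α t₀) (μ ra) := by
      have h := dist_triangle x (μ ra) (α t₀)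
      rw [dist_comm (μ ra) (α t₀)] at h
      linarith
    rw [e2, e3] at this
    linarith [le_of_lt hada]
  have bound1 : dist w (α t₀) ≤ dxw - t₀ + 2*(δs + 1) := by
    calc dist w (α t₀) ≤ dist w (μ ra) + dist (μ ra) (α t₀) := dist_triangle _ _ _
      _ ≤ (dxw - ra) + (δs + 1) := by
          rw [e1, dist_comm (μ ra) (α t₀)]
          linarith [le_of_lt hada]
      _ ≤ dxw - t₀ + 2*(δs + 1) := by linarith
  -- computations along ν
  have f1 : dist w (ν rb) = rb := by
    have := hν 0 ⟨le_refl 0, hdwy0⟩ rb hrbm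
    rw [hν0] at this
    rw [this, abs_of_nonpos (by linarith [hrbm.1])]
    ring
  have f2 : dist y (ν rb) = dwy - rb := by
    have := hν dwy ⟨hdwy0, le_refl _⟩ rb hrbm
    rw [hνd] at this
    rw [this, abs_of_nonneg (by linarith [hrbm.2])]
  have f3 : dist y (α t₀) = dxy - t₀ := by
    have := hα dxy ⟨hdxy0, le_refl _⟩ t₀ ht₀m
    rw [hαd] at this
    rw [this, abs_of_nonneg (by linarith)]
  have hrb_ub : rb ≤ dwy - dxy + t₀ + (δs + 1) := by
    have : dist y (α t₀) ≤ dist y (ν rb) + dist (α t₀) (ν rb) := by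
      have h := dist_triangle y (ν rb) (α t₀)
      rw [dist_comm (ν rb) (α t₀)] at h
      linarith
    rw [f2, f3] at this
    linarith [le_of_lt hbdb]
  have bound2 : dist w (α t₀) ≤ dwy - dxy + t₀ + 2*(δs + 1) := by
    calc dist w (α t₀) ≤ dist w (ν rb) + dist (ν rb) (α t₀) := dist_triangle _ _ _
      _ ≤ rb + (δs + 1) := by
          rw [f1, dist_comm (ν rb) (α t₀)]
          linarith [le_of_lt hbdb]
      _ ≤ dwy - dxy + t₀ + 2*(δs + 1) := by linarith
  linarith

end Stmt16Aux

/-- A geodesic metric space quasi-isometric to a geodesic space with the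
Bottleneck Property (in particular, to a simplicial tree) is Gromov `δ`-hyperbolic for
some `δ ≥ 0` (four-point condition). -/
theorem stmt16 {X T : Type*} [MetricSpace X] [MetricSpace T]
    (hX : GeodesicMetricSpace X) (hT : GeodesicMetricSpace T)
    (hBN : BottleneckProperty T)
    (f : X → T) (l C D : ℝ) (hl : 1 ≤ l) (hC : 0 < C) (hD : 0 < D)
    (hqi : ∀ x x' : X, dist x x' / l - C ≤ dist (f x) (f x') ∧
      dist (f x) (f x') ≤ l * dist x x' + C)
    (hdense : ∀ t : T, ∃ x : X, dist (f x) t ≤ D) :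
    ∃ δ ≥ (0:ℝ), ∀ x y z w : X,
      dist x y + dist z w ≤ max (dist x z + dist y w) (dist x w + dist y z) + 2 * δ := by
  classical
  obtain ⟨Δ, hΔ, hB⟩ := hBN
  have hB' : Stmt16Aux.BPData T Δ := hB
  have hGX : Stmt16Aux.GMS X := hX
  have hGT : Stmt16Aux.GMS T := hT
  have hup : ∀ a b : X, dist (f a) (f b) ≤ l * dist a b + C := fun a b => (hqi a b).2
  have hlow : ∀ a b : X, dist a b / l - C ≤ dist (f a) (f b) := fun a b => (hqi a b).1
  have hl0 : (0:ℝ) < l := by linarith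
  set δs := l * (Stmt16Aux.K3 l C Δ + 3*Δ + l + 2*C) with hδsdef
  have hK3 : 0 ≤ Stmt16Aux.K3 l C Δ := by
    rw [Stmt16Aux.K3]
    have h1 : (0:ℝ) < 10*Δ + 2*l + 3*C := by linarith
    have h2 : (0:ℝ) < l*l*(10*Δ + 2*l + 3*C) := mul_pos (mul_pos hl0 hl0) h1
    linarith
  have hδs0 : 0 ≤ δs := by
    have h1 : (0:ℝ) ≤ Stmt16Aux.K3 l C Δ + 3*Δ + l + 2*C := by linarith
    exact mul_nonneg (le_of_lt hl0) h1
  refine ⟨3*δs + 2, by linarith, ?_⟩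
  intro x y z w
  obtain ⟨α, hα0, hαd, hα⟩ := hX x y
  obtain ⟨β, hβ0, hβd, hβ⟩ := hX x z
  obtain ⟨γ, hγ0, hγd, hγ⟩ := hX z y
  obtain ⟨μ, hμ0, hμd, hμ⟩ := hX x w
  obtain ⟨ν, hν0, hνd, hν⟩ := hX w y
  have hslim1 : ∀ t ∈ Set.Icc 0 (dist x y),
      ∃ q ∈ (μ '' Set.Icc 0 (dist x w)) ∪ (ν '' Set.Icc 0 (dist w y)),
        dist (α t) q ≤ δs := by
    intro t htm
    exact Stmt16Aux.slim hGT hB' hΔ hl hC f hup hlow x y w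
      α hα hα0 hαd μ hμ hμ0 hμd ν hν hν0 hνd htm
  obtain ⟨t₀, ht₀m, h7a⟩ := Stmt16Aux.seven_a hδs0 x y w
    α hα hα0 hαd μ hμ hμ0 hμd ν hν hν0 hνd hslim1
  obtain ⟨q, hq, hdq⟩ := Stmt16Aux.slim hGT hB' hΔ hl hC f hup hlow x y z
    α hα hα0 hαd β hβ hβ0 hβd γ hγ hγ0 hγd ht₀m
  have hwq : dist w q ≤ dist w (α t₀) + δs := by
    calc dist w q ≤ dist w (α t₀) + dist (α t₀) q := dist_triangle _ _ _
      _ ≤ dist w (α t₀) + δs := by linarith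
  rcases hq with hqβ | hqγ
  · -- q on the side [x,z]
    obtain ⟨s, hsm, rfl⟩ := hqβ
    have e1 : dist x (β s) = s := by
      have := hβ 0 ⟨le_refl 0, dist_nonneg⟩ s hsm
      rw [hβ0] at this
      rw [this, abs_of_nonpos (by linarith [hsm.1])]; ring
    have e2 : dist z (β s) = dist x z - s := by
      have := hβ (dist x z) ⟨dist_nonneg, le_refl _⟩ s hsm
      rw [hβd] at this
      rw [this, abs_of_nonneg (by linarith [hsm.2])]
    have b1 : dist x w ≤ s + dist w (β s) := by
      have := dist_triangle x (β s) w
      rw [e1] at this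
      rw [dist_comm w (β s)]; linarith
    have b2 : dist z w ≤ (dist x z - s) + dist w (β s) := by
      have := dist_triangle z (β s) w
      rw [e2] at this
      rw [dist_comm w (β s)]; linarith
    have key : dist x y + dist z w ≤ dist x z + dist y w + (6*δs + 4) := by
      have hyw : dist y w = dist w y := dist_comm y w
      linarith
    calc dist x y + dist z w ≤ dist x z + dist y w + (6*δs + 4) := key
      _ ≤ max (dist x z + dist y w) (dist x w + dist y z) + 2 * (3*δs + 2) := by
          have := le_max_left (dist x z + dist y w) (dist x w + dist y z)
          linarith
  · -- q on the side [z,y]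
    obtain ⟨s, hsm, rfl⟩ := hqγ
    have e1 : dist z (γ s) = s := by
      have := hγ 0 ⟨le_refl 0, dist_nonneg⟩ s hsm
      rw [hγ0] at this
      rw [this, abs_of_nonpos (by linarith [hsm.1])]; ring
    have e2 : dist y (γ s) = dist z y - s := by
      have := hγ (dist z y) ⟨dist_nonneg, le_refl _⟩ s hsm
      rw [hγd] at this
      rw [this, abs_of_nonneg (by linarith [hsm.2])]
    have b1 : dist z w ≤ s + dist w (γ s) := by
      have := dist_triangle z (γ s) w
      rw [e1] at this
      rw [dist_comm w (γ s)]; linarith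
    have b2 : dist y w ≤ (dist z y - s) + dist w (γ s) := by
      have := dist_triangle y (γ s) w
      rw [e2] at this
      rw [dist_comm w (γ s)]; linarith
    have key : dist x y + dist z w ≤ dist x w + dist y z + (6*δs + 4) := by
      have hyw : dist y w = dist w y := dist_comm y w
      have hyz : dist y z = dist z y := dist_comm y z
      linarith
    calc dist x y + dist z w ≤ dist x w + dist y z + (6*δs + 4) := key
      _ ≤ max (dist x z + dist y w) (dist x w + dist y z) + 2 * (3*δs + 2) := by
          have := le_max_right (dist x z + dist y w) (dist x w + dist y z)
          linarith
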